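/- One expected-residual step of randomly pivoted Cholesky: if A is psd with tr(A) > 0, and the random residual is A' = A − A(:,s)A(s,:)/A(s,s) where the pivot s is drawn with probability A(j,j)/tr(A) (with the convention that the update is zero when A(s,s) = 0), then E[A'] = A − A²/tr(A). -/

import Mathlib

open ComplexOrder Matrix

theorem rpcholesky_expected_residual {N : ℕ} (A : Matrix (Fin N) (Fin N) ℂ)
    (hA : A.PosSemidef) (htr : 0 < (Matrix.trace A).re) :
    ∑ s : Fin N, (A s s / Matrix.trace A)
        • (A - (if A s s = 0 then 0
                else (A s s)⁻¹ • Matrix.of (fun i j => A i s * A s j)))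
      = A - (Matrix.trace A)⁻¹ • A ^ 2 := by
  have htr0 : Matrix.trace A ≠ 0 := fun h => by simp [h] at htr
  open scoped MatrixOrder in
  have hcol : ∀ s : Fin N, A s s = 0 → ∀ i, A i s = 0 := by
    intro s hs i
    set B := CFC.sqrt A with hBdef
    have hB2 : B * B = A := by
      exact CFC.sqrt_mul_sqrt_self A hA.nonneg
    have hBH : Bᴴ = B := (CFC.sqrt_nonneg A).posSemidef.isHermitian
    have hz : (fun k => B k s) = 0 := by
      apply dotProduct_star_self_eq_zero.mp
      rw [← hs, ← hB2, Matrix.mul_apply]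
      refine Finset.sum_congr rfl fun k _ => ?_
      have : B s k = star (B k s) := by
        conv_lhs => rw [← hBH]
        simp [Matrix.conjTranspose_apply]
      simp [this, dotProduct]
    rw [← hB2, Matrix.mul_apply]
    refine Finset.sum_eq_zero fun k _ => ?_
    have : B k s = 0 := congrFun hz k
    rw [this, mul_zero]
  have key : ∀ s : Fin N,
      (A s s / Matrix.trace A) • (A - (if A s s = 0 then 0
          else (A s s)⁻¹ • Matrix.of (fun i j => A i s * A s j)))
      = (A s s / Matrix.trace A) • A
        - (Matrix.trace A)⁻¹ • Matrix.of (fun i j => A i s * A s j) := by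
    intro s
    by_cases hs : A s s = 0
    · have hM : Matrix.of (fun i j => A i s * A s j) = (0 : Matrix (Fin N) (Fin N) ℂ) := by
        ext i j
        simp [hcol s hs i]
      simp [hs, hM]
    · rw [if_neg hs, smul_sub, smul_smul]
      congr 2
      field_simp
  rw [Finset.sum_congr rfl fun s _ => key s, Finset.sum_sub_distrib, ← Finset.sum_smul,
    ← Finset.smul_sum]
  congr 1
  · have : ∑ s : Fin N, A s s / Matrix.trace A = 1 := by
      rw [← Finset.sum_div]
      rw [show ∑ s : Fin N, A s s = Matrix.trace A from rfl, div_self htr0]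
    rw [this, one_smul]
  · congr 1
    ext i j
    simp [Matrix.sum_apply, pow_two, Matrix.mul_apply]
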